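/- arXiv:2305.09902 — 4 statements merged into one kernel-verified Lean document; each statement's English description precedes it below -/
import Mathlib

section
/- Let μ₀ > 0, ε > 0, μ(t) = μ₀ − εt, and x(t) = (μ₀/2 + ε/4)·e^{−2t} − μ(t)/2 − ε/4 (so x(0) = 0). Then there exists a unique t* > 0 with x(t*) = 0, and at this crossing μ(t*) = (μ₀ + ε/2)·e^{−2t*} − ε/2 > −ε/2. -/
open Real Filter

theorem stommel_drift_unique_crossing
    (μ₀ ε : ℝ) (hμ₀ : 0 < μ₀) (hε : 0 < ε)
    (μ : ℝ → ℝ) (hμ : ∀ t : ℝ, μ t = μ₀ - ε * t)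
    (x : ℝ → ℝ)
    (hx : ∀ t : ℝ, x t = (μ₀ / 2 + ε / 4) * Real.exp (-2 * t) - μ t / 2 - ε / 4) :
    (∃! t : ℝ, 0 < t ∧ x t = 0) ∧
    (∀ t : ℝ, 0 < t → x t = 0 →
      μ t = (μ₀ + ε / 2) * Real.exp (-2 * t) - ε / 2 ∧ -ε / 2 < μ t) := by
  set A : ℝ := μ₀ / 2 + ε / 4 with hAdef
  have hApos : 0 < A := by positivity
  have hxt : ∀ t : ℝ, x t = A * Real.exp (-2 * t) + ε * t / 2 - A := by
    intro t; rw [hx, hμ]; ring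
  -- key: any point strictly between 0 and a positive root has x < 0
  have key : ∀ u v : ℝ, 0 < u → u < v → x v = 0 → x u < 0 := by
    intro u v hu huv hxv
    have hv : 0 < v := hu.trans huv
    have hb : 0 < u / v := div_pos hu hv
    have hb1 : u / v < 1 := (div_lt_one hv).2 huv
    have ha : 0 < 1 - u / v := by linarith
    have hab : (1 - u / v) + u / v = 1 := by ring
    have hne : (0 : ℝ) ≠ -2 * v := by nlinarith
    have hconv := strictConvexOn_exp.2 (Set.mem_univ (0 : ℝ))
      (Set.mem_univ (-2 * v)) hne ha hb hab
    have hbv : (u / v) * v = u := by field_simp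
    have harg : (1 - u / v) • (0 : ℝ) + (u / v) • (-2 * v) = -2 * u := by
      simp only [smul_eq_mul]; nlinarith
    rw [harg] at hconv
    simp only [smul_eq_mul, Real.exp_zero, mul_one] at hconv
    -- hconv : exp (-2*u) < (1 - u/v) + (u/v) * exp (-2*v)
    have hxv' : A * Real.exp (-2 * v) + ε * v / 2 - A = 0 := by
      rw [← hxt v]; exact hxv
    have := mul_lt_mul_of_pos_left hconv hApos
    rw [hxt u]
    nlinarith [this, hxv', hbv]
  have hcont : Continuous x := by
    have hfe : x = fun t => A * Real.exp (-2 * t) + ε * t / 2 - A := funext hxt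
    rw [hfe]; continuity
  -- the point s where x s < 0
  set s : ℝ := μ₀ / (2 * ε) with hsdef
  have hs : 0 < s := by positivity
  have hxs : x s < 0 := by
    rw [hxt s]
    have h1 : 1 + 2 * s < Real.exp (2 * s) := by
      have h2s : (2 * s) ≠ 0 := by positivity
      have := Real.add_one_lt_exp h2s
      linarith
    have h2 : Real.exp (-2 * s) * Real.exp (2 * s) = 1 := by
      rw [← Real.exp_add]; norm_num
    have h3 : 0 < Real.exp (-2 * s) := Real.exp_pos _
    have h4 : Real.exp (-2 * s) * (1 + 2 * s) < 1 := by nlinarith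
    have hseq : ε * s = μ₀ / 2 := by rw [hsdef]; field_simp
    nlinarith [sq_nonneg μ₀, h3, h4]
  -- the point T where x T > 0
  set T : ℝ := s + 2 * A / ε + 1 with hTdef
  have hsT : s < T := by
    have : 0 < 2 * A / ε := by positivity
    rw [hTdef]; linarith
  have hxT : 0 < x T := by
    rw [hxt T, hTdef]
    have h1 : 0 < Real.exp (-2 * (s + 2 * A / ε + 1)) := Real.exp_pos _
    have h2 : ε * (2 * A / ε) = 2 * A := by field_simp
    nlinarith
  obtain ⟨t₀, ht₀mem, hxt₀⟩ := intermediate_value_Ioo hsT.le hcont.continuousOn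
    (show (0 : ℝ) ∈ Set.Ioo (x s) (x T) from ⟨hxs, hxT⟩)
  have ht₀pos : 0 < t₀ := hs.trans ht₀mem.1
  constructor
  · refine ⟨t₀, ⟨ht₀pos, hxt₀⟩, ?_⟩
    intro t ⟨htpos, hxt0⟩
    by_contra hne
    rcases lt_or_gt_of_ne hne with h | h
    · exact absurd hxt0 (ne_of_lt (key t t₀ htpos h hxt₀))
    · exact absurd hxt₀ (ne_of_lt (key t₀ t ht₀pos h hxt0))
  · intro t _ hxt0
    have h0 : (μ₀ / 2 + ε / 4) * Real.exp (-2 * t) - μ t / 2 - ε / 4 = 0 := by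
      rw [← hx t]; exact hxt0
    have hexp : 0 < Real.exp (-2 * t) := Real.exp_pos _
    constructor
    · nlinarith
    · nlinarith
end

section
/- Fix K > 0. For every ε > 0 the equation e^{2s} = 2K/ε + s + 1 has a unique solution s*(ε) > 0. Moreover s*(ε) − (1/2)·log(2K/ε) → 0 as ε → 0⁺, and consequently the tipping value μ_TP(ε) := −ε/2 − ε·s*(ε) satisfies μ_TP(ε)/(ε·log ε) → 1/2 as ε → 0⁺ (equivalently, μ_TP(ε) ∼ −(ε/2)·log(2K/ε)). -/
open Real Filter Set

private noncomputable def fAux (c s : ℝ) : ℝ := Real.exp (2 * s) - (c + s + 1)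

private lemma fAux_cont (c : ℝ) : Continuous (fAux c) := by
  unfold fAux; fun_prop

private lemma fAux_strictMono (c : ℝ) : StrictMonoOn (fAux c) (Set.Ici 0) := by
  have hderiv : ∀ s : ℝ, HasDerivAt (fAux c) (2 * Real.exp (2 * s) - 1) s := by
    intro s
    have h1 : HasDerivAt (fun s : ℝ => 2 * s) 2 s := by
      simpa using (hasDerivAt_id s).const_mul 2
    have h3 : HasDerivAt (fun s : ℝ => c + s + 1) 1 s := by
      simpa using ((hasDerivAt_id s).const_add c).add_const 1
    have h2' : HasDerivAt (fun x : ℝ => Real.exp (2 * x)) (2 * Real.exp (2 * s)) s := by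
      simpa [mul_comm] using h1.exp
    exact h2'.sub h3
  apply strictMonoOn_of_deriv_pos (convex_Ici 0) (fAux_cont c).continuousOn
  intro x hx
  rw [interior_Ici] at hx
  rw [(hderiv x).deriv]
  have h1 : Real.exp 0 < Real.exp (2 * x) := Real.exp_lt_exp.mpr (by
    have : (0:ℝ) < x := hx; linarith)
  rw [Real.exp_zero] at h1
  linarith

private lemma fAux_root (c s : ℝ) (heq : Real.exp (2 * s) = c + s + 1) :
    fAux c s = 0 := by simp [fAux, heq]

private lemma exists_unique_root (c : ℝ) (hc : 0 < c) :
    ∃! s : ℝ, 0 < s ∧ Real.exp (2 * s) = c + s + 1 := by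
  set M := c + 1 with hM
  have hM0 : (0:ℝ) ≤ M := by linarith
  have hf0 : fAux c 0 < 0 := by simp [fAux]; linarith
  have hfM : 0 ≤ fAux c M := by
    have h := Real.add_one_le_exp (2 * M)
    simp only [fAux]; nlinarith
  obtain ⟨s, hsmem, hs0⟩ :=
    intermediate_value_Icc hM0 (fAux_cont c).continuousOn ⟨le_of_lt hf0, hfM⟩
  have hspos : 0 < s := by
    rcases eq_or_lt_of_le hsmem.1 with h | h
    · exfalso; rw [← h] at hs0; rw [hs0] at hf0; exact lt_irrefl 0 hf0
    · exact h
  have hseq : Real.exp (2 * s) = c + s + 1 := by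
    have := hs0; simp only [fAux] at this; linarith
  refine ⟨s, ⟨hspos, hseq⟩, ?_⟩
  rintro t ⟨ht0, hteq⟩
  exact (fAux_strictMono c).injOn (Set.mem_Ici.mpr ht0.le) (Set.mem_Ici.mpr hspos.le)
    (by rw [fAux_root c t hteq, fAux_root c s hseq])

private lemma root_le (c s : ℝ) (hc : 0 < c) (hs : 0 < s)
    (heq : Real.exp (2 * s) = c + s + 1) : s ≤ Real.log (c + 2) := by
  by_contra h
  push_neg at h
  have hL : 0 < Real.log (c + 2) := Real.log_pos (by linarith)
  have hmono := (fAux_strictMono c) (Set.mem_Ici.mpr hL.le)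
    (Set.mem_Ici.mpr hs.le) h
  have hfs : fAux c s = 0 := fAux_root c s heq
  have hexp : Real.exp (2 * Real.log (c + 2)) = (c + 2) * (c + 2) := by
    rw [two_mul, Real.exp_add, Real.exp_log (by linarith)]
  have hlog : Real.log (c + 2) ≤ c + 1 := by
    have := Real.log_le_sub_one_of_pos (show (0:ℝ) < c + 2 by linarith)
    linarith
  have hfl : 0 ≤ fAux c (Real.log (c + 2)) := by
    simp only [fAux, hexp]; nlinarith
  linarith

private lemma root_gt (c s : ℝ) (hc : 0 < c) (hs : 0 < s)
    (heq : Real.exp (2 * s) = c + s + 1) : Real.log c < 2 * s := by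
  have h1 : c < Real.exp (2 * s) := by rw [heq]; linarith
  calc Real.log c < Real.log (Real.exp (2 * s)) := Real.log_lt_log hc h1
    _ = 2 * s := Real.log_exp _

private lemma diff_le (c s : ℝ) (hc : 0 < c) (hs : 0 < s)
    (heq : Real.exp (2 * s) = c + s + 1) :
    2 * s - Real.log c ≤ (s + 1) / c := by
  have h1 : 2 * s = Real.log (c + s + 1) := by
    rw [← heq, Real.log_exp]
  have h2 : Real.log (c + s + 1) - Real.log c = Real.log ((c + s + 1) / c) := by
    rw [Real.log_div (by linarith) (ne_of_gt hc)]
  have h3 : Real.log ((c + s + 1) / c) ≤ (c + s + 1) / c - 1 :=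
    Real.log_le_sub_one_of_pos (by positivity)
  have hc' : c ≠ 0 := ne_of_gt hc
  have h4 : (c + s + 1) / c - 1 = (s + 1) / c := by field_simp; ring
  linarith [h1, h2, h3, h4]

private lemma tendsto_g : Tendsto (fun x : ℝ => (Real.log (x + 2) + 1) / (2 * x))
    atTop (nhds 0) := by
  have hlog : Tendsto (fun x : ℝ => Real.log (x + 2) / (x + 2)) atTop (nhds 0) := by
    have h := Real.isLittleO_log_id_atTop.tendsto_div_nhds_zero
    exact h.comp (tendsto_atTop_add_const_right atTop 2 tendsto_id)
  have hinv : Tendsto (fun x : ℝ => (x + 2)⁻¹) atTop (nhds 0) :=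
    tendsto_inv_atTop_zero.comp (tendsto_atTop_add_const_right atTop 2 tendsto_id)
  have hsum : Tendsto (fun x : ℝ => Real.log (x + 2) / (x + 2) + (x + 2)⁻¹)
      atTop (nhds 0) := by simpa using hlog.add hinv
  apply tendsto_of_tendsto_of_tendsto_of_le_of_le' tendsto_const_nhds hsum
  · filter_upwards [eventually_ge_atTop (2:ℝ)] with x hx
    have h2 : (0:ℝ) ≤ Real.log (x + 2) := Real.log_nonneg (by linarith)
    positivity
  · filter_upwards [eventually_ge_atTop (2:ℝ)] with x hx
    have h1 : (0:ℝ) < x + 2 := by linarith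
    have h2 : x + 2 ≤ 2 * x := by linarith
    have h3 : (0:ℝ) ≤ Real.log (x + 2) + 1 := by
      have := Real.log_nonneg (show (1:ℝ) ≤ x + 2 by linarith); linarith
    have h4 : (Real.log (x + 2) + 1) / (2 * x) ≤ (Real.log (x + 2) + 1) / (x + 2) :=
      div_le_div_of_nonneg_left h3 h1 h2 |>.trans_eq rfl
    calc (Real.log (x + 2) + 1) / (2 * x) ≤ (Real.log (x + 2) + 1) / (x + 2) := h4
      _ = Real.log (x + 2) / (x + 2) + (x + 2)⁻¹ := by field_simp

theorem stommel_drift_tipping_asymptotics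
    (K : ℝ) (hK : 0 < K) :
    (∀ ε : ℝ, 0 < ε → ∃! s : ℝ, 0 < s ∧ Real.exp (2 * s) = 2 * K / ε + s + 1) ∧
    (∀ sStar : ℝ → ℝ,
      (∀ ε : ℝ, 0 < ε →
        0 < sStar ε ∧ Real.exp (2 * sStar ε) = 2 * K / ε + sStar ε + 1) →
      Tendsto (fun ε => sStar ε - (1 / 2) * Real.log (2 * K / ε))
        (nhdsWithin 0 (Set.Ioi 0)) (nhds 0) ∧
      Tendsto (fun ε => (-ε / 2 - ε * sStar ε) / (ε * Real.log ε))
        (nhdsWithin 0 (Set.Ioi 0)) (nhds (1 / 2))) := by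
  constructor
  · intro ε hε
    exact exists_unique_root (2 * K / ε) (by positivity)
  · intro sStar hsStar
    -- c tends to atTop
    have hcTop : Tendsto (fun ε : ℝ => 2 * K / ε) (nhdsWithin 0 (Set.Ioi 0)) atTop := by
      have h1 : Tendsto (fun ε : ℝ => (2 * K) * ε⁻¹) (nhdsWithin 0 (Set.Ioi 0)) atTop :=
        Tendsto.const_mul_atTop (by positivity) tendsto_inv_nhdsGT_zero
      simpa [div_eq_mul_inv] using h1
    -- the main difference tends to 0
    have hd : Tendsto (fun ε => sStar ε - (1 / 2) * Real.log (2 * K / ε))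
        (nhdsWithin 0 (Set.Ioi 0)) (nhds 0) := by
      have hG : Tendsto (fun ε : ℝ => (Real.log (2 * K / ε + 2) + 1) / (2 * (2 * K / ε)))
          (nhdsWithin 0 (Set.Ioi 0)) (nhds 0) := tendsto_g.comp hcTop
      apply tendsto_of_tendsto_of_tendsto_of_le_of_le' tendsto_const_nhds hG
      · filter_upwards [self_mem_nhdsWithin] with ε (hε : 0 < ε)
        have hc : 0 < 2 * K / ε := by positivity
        obtain ⟨hs, heq⟩ := hsStar ε hε
        have := root_gt (2 * K / ε) (sStar ε) hc hs heq
        linarith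
      · filter_upwards [self_mem_nhdsWithin] with ε (hε : 0 < ε)
        have hc : 0 < 2 * K / ε := by positivity
        obtain ⟨hs, heq⟩ := hsStar ε hε
        have h1 := diff_le (2 * K / ε) (sStar ε) hc hs heq
        have h2 := root_le (2 * K / ε) (sStar ε) hc hs heq
        have h4 : (sStar ε + 1) / (2 * (2 * K / ε)) ≤
            (Real.log (2 * K / ε + 2) + 1) / (2 * (2 * K / ε)) := by
          gcongr
        have h5 : sStar ε - 1 / 2 * Real.log (2 * K / ε)
            ≤ (sStar ε + 1) / (2 * (2 * K / ε)) := by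
          have : (sStar ε + 1) / (2 * (2 * K / ε)) = ((sStar ε + 1) / (2 * K / ε)) / 2 := by
            ring
          rw [this]; linarith
        linarith
    refine ⟨hd, ?_⟩
    -- part 3
    set L : ℝ := -(1/2) - (1/2) * Real.log (2 * K) with hL
    have hnum : Tendsto (fun ε => L - (sStar ε - (1 / 2) * Real.log (2 * K / ε)))
        (nhdsWithin 0 (Set.Ioi 0)) (nhds L) := by
      simpa using (tendsto_const_nhds (x := L) (f := nhdsWithin (0:ℝ) (Set.Ioi 0))).sub hd
    have hloginv : Tendsto (fun ε : ℝ => (Real.log ε)⁻¹)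
        (nhdsWithin 0 (Set.Ioi 0)) (nhds 0) := by
      have h1 : Tendsto (fun ε : ℝ => -Real.log ε) (nhdsWithin 0 (Set.Ioi 0)) atTop :=
        tendsto_neg_atBot_atTop.comp Real.tendsto_log_nhdsGT_zero
      have h2 := h1.inv_tendsto_atTop
      have h3 := h2.neg
      simpa [inv_neg] using h3
    have hmain : Tendsto
        (fun ε => 1 / 2 + (L - (sStar ε - (1 / 2) * Real.log (2 * K / ε))) * (Real.log ε)⁻¹)
        (nhdsWithin 0 (Set.Ioi 0)) (nhds (1 / 2)) := by
      have := (hnum.mul hloginv)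
      simpa using (tendsto_const_nhds (x := (1:ℝ)/2)
        (f := nhdsWithin (0:ℝ) (Set.Ioi 0))).add this
    apply hmain.congr'
    have hmem : Set.Ioo (0:ℝ) 1 ∈ nhdsWithin (0:ℝ) (Set.Ioi 0) := by
      apply Ioo_mem_nhdsGT_of_mem
      constructor <;> norm_num
    filter_upwards [hmem] with ε hε
    obtain ⟨hε0, hε1⟩ := hε
    have hlog : Real.log ε < 0 := Real.log_neg hε0 hε1
    have hlogne : Real.log ε ≠ 0 := ne_of_lt hlog
    have hεne : ε ≠ 0 := ne_of_gt hε0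
    have hsplit : Real.log (2 * K / ε) = Real.log (2 * K) - Real.log ε :=
      Real.log_div (by positivity) hεne
    rw [hsplit, hL]
    field_simp
    ring
end

section
/- Let μ₀, A ∈ ℝ, ω ≥ 0 and 0 ≤ ε₁ < ε₂. Let x₁, x₂ : [0,∞) → ℝ be differentiable with xᵢ'(t) = 2|xᵢ(t)| − (μ₀ − εᵢ·t) + A·cos(ωt) for all t ≥ 0 and x₁(0) = x₂(0). Then x₂(t) > x₁(t) for all t > 0. Consequently, if both solutions reach a tipping threshold K with x₁(0) = x₂(0) < K, the tipping time is strictly decreasing in the drift rate ε. -/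
open Real Filter Set

theorem stommel_tipping_time_decreasing_in_drift
    (μ₀ A ω : ℝ) (hω : 0 ≤ ω)
    (ε₁ ε₂ : ℝ) (hε₁ : 0 ≤ ε₁) (hε : ε₁ < ε₂)
    (x₁ x₂ : ℝ → ℝ)
    (hderiv₁ : ∀ t : ℝ, 0 ≤ t →
      HasDerivAt x₁ (2 * |x₁ t| - (μ₀ - ε₁ * t) + A * Real.cos (ω * t)) t)
    (hderiv₂ : ∀ t : ℝ, 0 ≤ t →
      HasDerivAt x₂ (2 * |x₂ t| - (μ₀ - ε₂ * t) + A * Real.cos (ω * t)) t)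
    (hinit : x₁ 0 = x₂ 0) :
    (∀ t : ℝ, 0 < t → x₁ t < x₂ t) ∧
    (∀ K : ℝ, x₁ 0 < K →
      ∀ t₁ t₂ : ℝ,
        (0 < t₁ ∧ x₁ t₁ = K ∧ ∀ s ∈ Set.Ico (0 : ℝ) t₁, x₁ s ≠ K) →
        (0 < t₂ ∧ x₂ t₂ = K ∧ ∀ s ∈ Set.Ico (0 : ℝ) t₂, x₂ s ≠ K) →
        t₂ < t₁) := by
  set u : ℝ → ℝ := fun t => x₂ t - x₁ t with hu_def
  have hu0 : u 0 = 0 := by simp [hu_def, hinit]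
  have hu : ∀ s : ℝ, 0 ≤ s →
      HasDerivAt u (2 * |x₂ s| - 2 * |x₁ s| + (ε₂ - ε₁) * s) s := by
    intro s hs
    have h := (hderiv₂ s hs).sub (hderiv₁ s hs)
    exact h.congr_deriv (by ring)
  have hcont : ContinuousOn u (Ici (0:ℝ)) := fun s hs =>
    (hu s hs).continuousAt.continuousWithinAt
  -- Step A: u ≥ 0 on [0, ∞)
  have nonneg : ∀ t : ℝ, 0 ≤ t → 0 ≤ u t := by
    intro t₀ ht₀
    by_contra hneg
    push_neg at hneg
    set S : Set ℝ := Icc 0 t₀ ∩ u ⁻¹' Ici 0 with hS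
    have hS0 : (0:ℝ) ∈ S := ⟨⟨le_refl 0, ht₀⟩, by simp [hu0]⟩
    have hSne : S.Nonempty := ⟨0, hS0⟩
    have hSbdd : BddAbove S := bddAbove_Icc.mono inter_subset_left
    have hSclosed : IsClosed S :=
      ContinuousOn.preimage_isClosed_of_isClosed
        (hcont.mono (fun x hx => hx.1)) isClosed_Icc isClosed_Ici
    set τ := sSup S with hτ_def
    have hτS : τ ∈ S := hSclosed.csSup_mem hSne hSbdd
    obtain ⟨⟨hτ0, hτt₀⟩, hτu'⟩ := hτS
    have hτu : 0 ≤ u τ := hτu'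
    have hτlt : τ < t₀ :=
      lt_of_le_of_ne hτt₀ (fun h' => absurd (h' ▸ hτu) (not_le.mpr hneg))
    have hru : ∀ s ∈ Ioc τ t₀, u s < 0 := by
      intro s hs
      by_contra h
      push_neg at h
      have hsS : s ∈ S := ⟨⟨hτ0.trans hs.1.le, hs.2⟩, h⟩
      exact absurd (le_csSup hSbdd hsS) (not_le.mpr hs.1)
    set F : ℝ → ℝ := fun s => Real.exp (-(2*s)) * u s with hF_def
    have hFd : ∀ s ∈ Ioo τ t₀, HasDerivAt F
        (Real.exp (-(2*s)) * (-2) * u s +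
          Real.exp (-(2*s)) * (2 * |x₂ s| - 2 * |x₁ s| + (ε₂ - ε₁) * s)) s := by
      intro s hs
      have hs0 : (0:ℝ) ≤ s := hτ0.trans hs.1.le
      have he : HasDerivAt (fun r : ℝ => Real.exp (-(2*r)))
          (Real.exp (-(2*s)) * (-2)) s := by
        have h1 : HasDerivAt (fun r : ℝ => -(2*r)) (-2) s := by
          simpa [Pi.neg_def] using ((hasDerivAt_id s).const_mul (2:ℝ)).neg
        simpa [mul_comm] using h1.exp
      exact he.mul (hu s hs0)
    have hmono : MonotoneOn F (Icc τ t₀) := by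
      apply monotoneOn_of_deriv_nonneg (convex_Icc _ _)
      · exact ((Real.continuous_exp.comp (by continuity)).continuousOn).mul
          (hcont.mono (fun x hx => hτ0.trans hx.1))
      · intro s hs
        rw [interior_Icc] at hs
        exact (hFd s hs).differentiableAt.differentiableWithinAt
      · intro s hs
        rw [interior_Icc] at hs
        rw [(hFd s hs).deriv]
        have hus : u s < 0 := hru s ⟨hs.1, hs.2.le⟩
        have hus' : x₂ s - x₁ s < 0 := hus
        have hs0 : (0:ℝ) ≤ s := hτ0.trans hs.1.le
        have hexp := Real.exp_pos (-(2*s))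
        have hc : 0 ≤ (ε₂ - ε₁) * s := mul_nonneg (by linarith) hs0
        have habs : 2 * |x₂ s| - 2 * |x₁ s| + (ε₂ - ε₁) * s
            - 2 * (x₂ s - x₁ s) ≥ 0 := by
          rcases abs_cases (x₁ s) with ⟨e1, f1⟩ | ⟨e1, f1⟩ <;>
            rcases abs_cases (x₂ s) with ⟨e2, f2⟩ | ⟨e2, f2⟩ <;> linarith
        have huu : u s = x₂ s - x₁ s := rfl
        nlinarith [habs, hexp, hus']
    have hmem₁ : τ ∈ Icc τ t₀ := ⟨le_refl τ, hτlt.le⟩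
    have hmem₂ : t₀ ∈ Icc τ t₀ := ⟨hτlt.le, le_refl t₀⟩
    have hle := hmono hmem₁ hmem₂ hτlt.le
    have h1 : (0:ℝ) ≤ Real.exp (-(2*τ)) * u τ :=
      mul_nonneg (Real.exp_pos _).le hτu
    have h2 : Real.exp (-(2*t₀)) * u t₀ < 0 :=
      mul_neg_of_pos_of_neg (Real.exp_pos _) hneg
    have : F τ ≤ F t₀ := hle
    simp only [hF_def] at this
    linarith
  -- Step B: u > 0 on (0, ∞)
  have pos : ∀ t : ℝ, 0 < t → 0 < u t := by
    intro t ht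
    set G : ℝ → ℝ := fun s => Real.exp (2*s) * u s with hG_def
    have hGd : ∀ s : ℝ, 0 ≤ s → HasDerivAt G
        (Real.exp (2*s) * 2 * u s +
          Real.exp (2*s) * (2 * |x₂ s| - 2 * |x₁ s| + (ε₂ - ε₁) * s)) s := by
      intro s hs0
      have he : HasDerivAt (fun r : ℝ => Real.exp (2*r))
          (Real.exp (2*s) * 2) s := by
        have h1 : HasDerivAt (fun r : ℝ => (2:ℝ)*r) (2:ℝ) s := by
          simpa using (hasDerivAt_id s).const_mul (2:ℝ)
        simpa [mul_comm] using h1.exp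
      exact he.mul (hu s hs0)
    have hsm : StrictMonoOn G (Icc 0 t) := by
      apply strictMonoOn_of_deriv_pos (convex_Icc _ _)
      · exact ((Real.continuous_exp.comp (by continuity)).continuousOn).mul
          (hcont.mono (fun x hx => hx.1))
      · intro s hs
        rw [interior_Icc] at hs
        rw [(hGd s hs.1.le).deriv]
        have hus : 0 ≤ u s := nonneg s hs.1.le
        have hus' : 0 ≤ x₂ s - x₁ s := hus
        have hexp := Real.exp_pos (2*s)
        have hc : 0 < (ε₂ - ε₁) * s := mul_pos (by linarith) hs.1
        have habs : 2 * (x₂ s - x₁ s) + (2 * |x₂ s| - 2 * |x₁ s|) ≥ 0 := by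
          rcases abs_cases (x₁ s) with ⟨e1, f1⟩ | ⟨e1, f1⟩ <;>
            rcases abs_cases (x₂ s) with ⟨e2, f2⟩ | ⟨e2, f2⟩ <;> linarith
        have huu : u s = x₂ s - x₁ s := rfl
        nlinarith [habs, hexp, hc]
    have hlt := hsm (left_mem_Icc.mpr ht.le) (right_mem_Icc.mpr ht.le) ht
    simp only [hG_def] at hlt
    have h0 : Real.exp (2*(0:ℝ)) * u 0 = 0 := by simp [hu0]
    have hexp := Real.exp_pos (2*t)
    nlinarith [hlt, h0, hexp]
  have part1 : ∀ t : ℝ, 0 < t → x₁ t < x₂ t := by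
    intro t ht
    have := pos t ht
    simpa [hu_def, sub_pos] using this
  refine ⟨part1, ?_⟩
  intro K hK t₁ t₂ ⟨ht₁, hx₁K, hmin₁⟩ ⟨ht₂, hx₂K, hmin₂⟩
  by_contra h
  push_neg at h
  have hgt : K < x₂ t₁ := hx₁K ▸ part1 t₁ ht₁
  rcases eq_or_lt_of_le h with heq | hlt
  · subst heq
    rw [hx₂K] at hgt
    exact lt_irrefl K hgt
  · have hc2 : ContinuousOn x₂ (Icc 0 t₁) := fun s hs =>
      (hderiv₂ s hs.1).continuousAt.continuousWithinAt
    have hKmem : K ∈ Icc (x₂ 0) (x₂ t₁) := ⟨(hinit ▸ hK).le, hgt.le⟩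
    obtain ⟨s, hs, hsK⟩ := intermediate_value_Icc ht₁.le hc2 hKmem
    exact hmin₂ s ⟨hs.1, lt_of_le_of_lt hs.2 hlt⟩ hsK
end

section
/- Let g : [0,∞) → ℝ be continuous, let 0 ≤ α₁ < α₂, and let x₁, x₂ : [0,∞) → ℝ be differentiable with xᵢ'(t) = 2·√(xᵢ(t)² + αᵢ²) − 2αᵢ + g(t) for all t ≥ 0 and x₁(0) = x₂(0). Then x₂(t) ≤ x₁(t) for all t ≥ 0. In particular, for the drifting forced model g(t) = −(μ₀ − εt) + A·cos(ωt) with ε > 0, any tipping time (first time x reaches a threshold K with x' > 0 there) is non-decreasing in the smoothing parameter α, and the tipping value μ_TP = μ₀ − ε·t_TP is non-increasing in α: smoothing delays tipping. -/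
open Real Filter
open Topology

lemma aux_mono (a α₁ α₂ : ℝ) (h1 : 0 ≤ α₁) (h2 : α₁ ≤ α₂) :
    2 * Real.sqrt (a ^ 2 + α₂ ^ 2) - 2 * α₂ ≤ 2 * Real.sqrt (a ^ 2 + α₁ ^ 2) - 2 * α₁ := by
  set s := Real.sqrt (a ^ 2 + α₁ ^ 2) with hs
  have hs0 : 0 ≤ s := Real.sqrt_nonneg _
  have hs2 : s ^ 2 = a ^ 2 + α₁ ^ 2 := Real.sq_sqrt (by positivity)
  have hsa : α₁ ≤ s := by
    rw [hs]
    calc α₁ = Real.sqrt (α₁ ^ 2) := by rw [Real.sqrt_sq h1]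
    _ ≤ _ := Real.sqrt_le_sqrt (by nlinarith)
  have key : Real.sqrt (a ^ 2 + α₂ ^ 2) ≤ s + (α₂ - α₁) := by
    have : a ^ 2 + α₂ ^ 2 ≤ (s + (α₂ - α₁)) ^ 2 := by nlinarith
    calc Real.sqrt (a ^ 2 + α₂ ^ 2) ≤ Real.sqrt ((s + (α₂ - α₁)) ^ 2) := Real.sqrt_le_sqrt this
    _ = s + (α₂ - α₁) := Real.sqrt_sq (by linarith)
  linarith

lemma aux_lip (a b c : ℝ) (hc : 0 ≤ c) :
    Real.sqrt (a ^ 2 + c) - Real.sqrt (b ^ 2 + c) ≤ |a - b| := by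
  set s := Real.sqrt (a ^ 2 + c) with hsd
  set t := Real.sqrt (b ^ 2 + c) with htd
  have hs0 : 0 ≤ s := Real.sqrt_nonneg _
  have ht0 : 0 ≤ t := Real.sqrt_nonneg _
  have hs2 : s ^ 2 = a ^ 2 + c := Real.sq_sqrt (by positivity)
  have ht2 : t ^ 2 = b ^ 2 + c := Real.sq_sqrt (by positivity)
  have hsa : |a| ≤ s := by
    rw [hsd, ← Real.sqrt_sq_eq_abs]; exact Real.sqrt_le_sqrt (by nlinarith)
  have htb : |b| ≤ t := by
    rw [htd, ← Real.sqrt_sq_eq_abs]; exact Real.sqrt_le_sqrt (by nlinarith)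
  have habs : (a - b) * (a + b) ≤ |a - b| * (|a| + |b|) := by
    calc (a - b) * (a + b) ≤ |(a - b) * (a + b)| := le_abs_self _
    _ = |a - b| * |a + b| := abs_mul _ _
    _ ≤ |a - b| * (|a| + |b|) := mul_le_mul_of_nonneg_left (abs_add_le a b) (abs_nonneg _)
  nlinarith [abs_nonneg (a - b), abs_nonneg a, abs_nonneg b]

lemma comparison
    (g : ℝ → ℝ)
    (α₁ α₂ : ℝ) (hα₁ : 0 ≤ α₁) (hα : α₁ < α₂)
    (x₁ x₂ : ℝ → ℝ)
    (hderiv₁ : ∀ t : ℝ, 0 ≤ t →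
      HasDerivAt x₁ (2 * Real.sqrt ((x₁ t) ^ 2 + α₁ ^ 2) - 2 * α₁ + g t) t)
    (hderiv₂ : ∀ t : ℝ, 0 ≤ t →
      HasDerivAt x₂ (2 * Real.sqrt ((x₂ t) ^ 2 + α₂ ^ 2) - 2 * α₂ + g t) t)
    (hinit : x₁ 0 = x₂ 0) :
    ∀ t : ℝ, 0 ≤ t → x₂ t ≤ x₁ t := by
  intro T hT
  set y : ℝ → ℝ := fun s => x₂ s - x₁ s with hy
  set f : ℝ → ℝ := fun s => max (y s) 0 with hfdef
  set d : ℝ → ℝ := fun s =>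
    (2 * Real.sqrt ((x₂ s) ^ 2 + α₂ ^ 2) - 2 * α₂ + g s)
      - (2 * Real.sqrt ((x₁ s) ^ 2 + α₁ ^ 2) - 2 * α₁ + g s) with hd
  set F' : ℝ → ℝ := fun s => if 0 < y s then d s else 0 with hF'
  have hyderiv : ∀ s : ℝ, 0 ≤ s → HasDerivAt y (d s) s := fun s hs =>
    (hderiv₂ s hs).sub (hderiv₁ s hs)
  have hycont : ∀ s : ℝ, 0 ≤ s → ContinuousAt y s := fun s hs =>
    (hyderiv s hs).differentiableAt.continuousAt
  have hfcont : ContinuousOn f (Set.Icc 0 T) := by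
    intro s hs
    exact (ContinuousAt.sup (hycont s hs.1) continuousAt_const).continuousWithinAt
  -- the liminf slope condition
  have hslope : ∀ s ∈ Set.Ico (0:ℝ) T, ∀ r, F' s < r →
      ∃ᶠ z in 𝓝[>] s, (z - s)⁻¹ * (f z - f s) < r := by
    intro s hs r hr
    rcases lt_trichotomy (y s) 0 with hneg | hzero | hpos
    · -- y s < 0 : f ≡ 0 near s, F' s = 0
      rw [hF'] at hr; simp only [not_lt.mpr hneg.le, if_neg (not_lt.mpr hneg.le)] at hr
      have hev : ∀ᶠ z in 𝓝 s, y z < 0 :=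
        (hycont s hs.1).eventually_lt continuousAt_const hneg
      apply Eventually.frequently
      filter_upwards [nhdsWithin_le_nhds hev] with z hz
      have hfz : f z = 0 := max_eq_right hz.le
      have hfs : f s = 0 := max_eq_right hneg.le
      rw [hfz, hfs]
      simpa using hr
    · -- y s = 0
      have hF0 : F' s = 0 := by rw [hF']; simp [hzero]
      rw [hF0] at hr
      have hfs : f s = 0 := by rw [hfdef]; simp [hzero]
      have hd0 : d s ≤ 0 := by
        have hx : x₂ s = x₁ s := by
          have := hzero; rw [hy] at this; simp only at this; linarith [sub_eq_zero.mp this]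
        rw [hd]; simp only
        rw [hx]
        have := aux_mono (x₁ s) α₁ α₂ hα₁ hα.le
        linarith
      have hts : Tendsto (slope y s) (𝓝[≠] s) (𝓝 (d s)) :=
        hasDerivAt_iff_tendsto_slope.mp (hyderiv s hs.1)
      have hts' : Tendsto (slope y s) (𝓝[>] s) (𝓝 (d s)) :=
        hts.mono_left (nhdsWithin_mono _ fun z hz => ne_of_gt hz)
      have hev : ∀ᶠ z in 𝓝[>] s, slope y s z < r :=
        hts'.eventually_lt_const (lt_of_le_of_lt hd0 hr)
      apply Eventually.frequently
      filter_upwards [hev, self_mem_nhdsWithin] with z hz (hzs : s < z)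
      rw [hfs, sub_zero]
      have hinv : 0 < (z - s)⁻¹ := inv_pos.mpr (by linarith)
      have hslopeeq : slope y s z = (z - s)⁻¹ * (y z - y s) := by
        rw [slope_def_field]; ring
      rw [hzero, sub_zero] at hslopeeq
      rcases le_or_gt (y z) 0 with h0 | h0
      · have : f z = 0 := max_eq_right h0
        rw [this]; simp; linarith
      · have : f z = y z := max_eq_left h0.le
        rw [this, ← hslopeeq]; exact hz
    · -- y s > 0 : f = y locally
      simp only [hF', if_pos hpos] at hr
      have hev : ∀ᶠ z in 𝓝 s, 0 < y z :=
        continuousAt_const.eventually_lt (hycont s hs.1) hpos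
      have hts : Tendsto (slope y s) (𝓝[>] s) (𝓝 (d s)) :=
        (hasDerivAt_iff_tendsto_slope.mp (hyderiv s hs.1)).mono_left
          (nhdsWithin_mono _ fun z hz => ne_of_gt hz)
      have hev2 : ∀ᶠ z in 𝓝[>] s, slope y s z < r := hts.eventually_lt_const hr
      apply Eventually.frequently
      filter_upwards [hev2, nhdsWithin_le_nhds hev, self_mem_nhdsWithin]
        with z hz1 hz2 (hzs : s < z)
      have hfz : f z = y z := max_eq_left hz2.le
      have hfs : f s = y s := max_eq_left hpos.le
      rw [hfz, hfs]
      calc (z - s)⁻¹ * (y z - y s) = slope y s z := by rw [slope_def_field]; ring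
      _ < r := hz1
  -- the bound
  have hbound : ∀ s ∈ Set.Ico (0:ℝ) T, F' s ≤ 2 * f s + 0 := by
    intro s hs
    rw [add_zero]; simp only [hF']
    by_cases hpos : 0 < y s
    · rw [if_pos hpos]
      have hfs : f s = y s := max_eq_left hpos.le
      rw [hfs]
      have h1 := aux_mono (x₁ s) α₁ α₂ hα₁ hα.le
      have h2 := aux_lip (x₂ s) (x₁ s) (α₂ ^ 2) (by positivity)
      have habs : |x₂ s - x₁ s| = y s := by
        rw [hy]; exact abs_of_pos hpos
      rw [hd]; simp only
      rw [habs] at h2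
      have : y s = x₂ s - x₁ s := rfl
      linarith
    · rw [if_neg hpos]
      have : f s = 0 := max_eq_right (not_lt.mp hpos)
      rw [this]; linarith
  have h0 : f 0 ≤ 0 := by
    rw [hfdef, hy]; simp [hinit]
  have := le_gronwallBound_of_liminf_deriv_right_le hfcont hslope h0 hbound T
    ⟨hT, le_refl T⟩
  rw [gronwallBound_ε0_δ0] at this
  have : y T ≤ 0 := le_trans (le_max_left _ _) this
  rw [hy] at this; simp only at this; linarith

theorem smoothing_delays_tipping
    (g : ℝ → ℝ) (hg : Continuous g)
    (α₁ α₂ : ℝ) (hα₁ : 0 ≤ α₁) (hα : α₁ < α₂)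
    (x₁ x₂ : ℝ → ℝ)
    (hderiv₁ : ∀ t : ℝ, 0 ≤ t →
      HasDerivAt x₁ (2 * Real.sqrt ((x₁ t) ^ 2 + α₁ ^ 2) - 2 * α₁ + g t) t)
    (hderiv₂ : ∀ t : ℝ, 0 ≤ t →
      HasDerivAt x₂ (2 * Real.sqrt ((x₂ t) ^ 2 + α₂ ^ 2) - 2 * α₂ + g t) t)
    (hinit : x₁ 0 = x₂ 0) :
    (∀ t : ℝ, 0 ≤ t → x₂ t ≤ x₁ t) ∧
    (∀ μ₀ ε A ω K : ℝ, 0 < ε →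
      (∀ t : ℝ, g t = -(μ₀ - ε * t) + A * Real.cos (ω * t)) →
      ∀ t₁ t₂ : ℝ,
        (0 ≤ t₁ ∧ x₁ t₁ = K ∧
          0 < 2 * Real.sqrt ((x₁ t₁) ^ 2 + α₁ ^ 2) - 2 * α₁ + g t₁ ∧
          ∀ s ∈ Set.Ico (0 : ℝ) t₁, x₁ s ≠ K) →
        (0 ≤ t₂ ∧ x₂ t₂ = K ∧
          0 < 2 * Real.sqrt ((x₂ t₂) ^ 2 + α₂ ^ 2) - 2 * α₂ + g t₂ ∧
          ∀ s ∈ Set.Ico (0 : ℝ) t₂, x₂ s ≠ K) →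
        t₁ ≤ t₂ ∧ μ₀ - ε * t₂ ≤ μ₀ - ε * t₁) := by
  have hcomp := comparison g α₁ α₂ hα₁ hα x₁ x₂ hderiv₁ hderiv₂ hinit
  refine ⟨hcomp, ?_⟩
  intro μ₀ ε A ω K hε hgform t₁ t₂ ⟨ht₁, hK₁, hd₁, hne₁⟩ ⟨ht₂, hK₂, hd₂, hne₂⟩
  have hcont₁ : ContinuousOn x₁ (Set.Icc 0 t₁) := fun s hs =>
    (hderiv₁ s hs.1).differentiableAt.continuousAt.continuousWithinAt
  have main : t₁ ≤ t₂ := by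
    by_contra hlt
    push_neg at hlt  -- t₂ < t₁
    have ht₁pos : 0 < t₁ := lt_of_le_of_lt ht₂ hlt
    -- x₁ t₂ > K
    have hx1t2 : K < x₁ t₂ := by
      have h1 : K ≤ x₁ t₂ := hK₂ ▸ hcomp t₂ ht₂
      have h2 : x₁ t₂ ≠ K := hne₁ t₂ ⟨ht₂, hlt⟩
      exact lt_of_le_of_ne h1 (Ne.symm h2)
    -- x₁ > K on [0, t₁)
    have h1all : ∀ s ∈ Set.Ico (0:ℝ) t₁, K < x₁ s := by
      intro s hs
      by_contra hle
      push_neg at hle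
      have hlt' : x₁ s < K := lt_of_le_of_ne hle (hne₁ s hs)
      have hsub : Set.uIcc s t₂ ⊆ Set.Icc 0 t₁ := by
        apply Set.uIcc_subset_Icc ⟨hs.1, hs.2.le⟩ ⟨ht₂, hlt.le⟩
      have := intermediate_value_uIcc (hcont₁.mono hsub)
      have hmem : K ∈ Set.uIcc (x₁ s) (x₁ t₂) :=
        Set.mem_uIcc.mpr (Or.inl ⟨hlt'.le, hx1t2.le⟩)
      obtain ⟨c, hc, hcK⟩ := this hmem
      have hcIco : c ∈ Set.Ico (0:ℝ) t₁ :=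
        ⟨(hsub hc).1, lt_of_le_of_lt hc.2 (max_lt hs.2 hlt)⟩
      exact hne₁ c hcIco hcK
    -- x₂ 0 > K
    have hx20 : K < x₂ 0 := by
      rw [← hinit]; exact h1all 0 ⟨le_refl 0, ht₁pos⟩
    rcases eq_or_lt_of_le ht₂ with h0 | ht₂pos
    · rw [← h0] at hK₂; linarith [hK₂ ▸ hx20]
    -- x₂ > K on [0, t₂)
    have hcont₂ : ContinuousOn x₂ (Set.Icc 0 t₂) := fun s hs =>
      (hderiv₂ s hs.1).differentiableAt.continuousAt.continuousWithinAt
    have h2all : ∀ s ∈ Set.Ico (0:ℝ) t₂, K < x₂ s := by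
      intro s hs
      by_contra hle
      push_neg at hle
      have hlt' : x₂ s < K := lt_of_le_of_ne hle (hne₂ s hs)
      have hsub : Set.uIcc (0:ℝ) s ⊆ Set.Icc 0 t₂ :=
        Set.uIcc_subset_Icc ⟨le_refl 0, ht₂⟩ ⟨hs.1, hs.2.le⟩
      have := intermediate_value_uIcc (hcont₂.mono hsub)
      have hmem : K ∈ Set.uIcc (x₂ 0) (x₂ s) :=
        Set.mem_uIcc.mpr (Or.inr ⟨hlt'.le, hx20.le⟩)
      obtain ⟨c, hc, hcK⟩ := this hmem
      have hcIco : c ∈ Set.Ico (0:ℝ) t₂ :=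
        ⟨(hsub hc).1, lt_of_le_of_lt hc.2 (max_lt ht₂pos hs.2)⟩
      exact hne₂ c hcIco hcK
    -- derivative at t₂ positive, approach from left
    have hts : Tendsto (slope x₂ t₂) (𝓝[<] t₂) (𝓝 (2 * Real.sqrt ((x₂ t₂) ^ 2 + α₂ ^ 2) - 2 * α₂ + g t₂)) :=
      (hasDerivAt_iff_tendsto_slope.mp (hderiv₂ t₂ ht₂)).mono_left
        (nhdsWithin_mono _ fun z hz => ne_of_lt hz)
    have hev : ∀ᶠ z in 𝓝[<] t₂, 0 < slope x₂ t₂ z := hts.eventually_const_lt hd₂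
    have hev2 : Set.Ioo (0:ℝ) t₂ ∈ 𝓝[<] t₂ := Ioo_mem_nhdsLT_of_mem ⟨ht₂pos, le_refl t₂⟩
    obtain ⟨z, hz1, hz2⟩ := (hev.and (eventually_of_mem hev2 fun z hz => hz)).exists
    -- slope > 0 and z < t₂ gives x₂ z < K
    have hzlt : z < t₂ := hz2.2
    have : slope x₂ t₂ z = (x₂ z - K) / (z - t₂) := by
      rw [slope_def_field, hK₂]
    rw [this] at hz1
    have hden : z - t₂ < 0 := by linarith
    have : x₂ z < K := by
      by_contra hge
      push_neg at hge
      have hxz : K < x₂ z := h2all z ⟨hz2.1.le, hzlt⟩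
      have : (x₂ z - K) / (z - t₂) < 0 := div_neg_of_pos_of_neg (by linarith) hden
      linarith
    linarith [h2all z ⟨hz2.1.le, hzlt⟩]
  refine ⟨main, ?_⟩
  nlinarith
end
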